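/- Let (A_n) be a sequence of matrices in the indefinite orthogonal group O(p,q) (p+q = d ≥ 1) such that the operator norms ‖A_n‖ tend to infinity. Then there exists a subsequence (A_{n_k}) and a sequence of vectors v_k in ℝ^d with v_k → v_∞ ≠ 0 and A_{n_k} v_k → 0. -/

import Mathlib

open Filter
open scoped RealInnerProductSpace

noncomputable def pqForm (p q : ℕ) (v w : EuclideanSpace ℝ (Fin (p + q))) : ℝ :=
  ∑ i : Fin (p + q), (if (i : ℕ) < p then (1 : ℝ) else -1) * v i * w i

noncomputable def Jlin (p q : ℕ) :
    EuclideanSpace ℝ (Fin (p + q)) →L[ℝ] EuclideanSpace ℝ (Fin (p + q)) :=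
  LinearMap.toContinuousLinearMap
    { toFun := fun v => WithLp.toLp 2 (fun i => (if (i : ℕ) < p then (1 : ℝ) else -1) * v i)
      map_add' := by
        intro v w; ext i
        show _ * (v i + w i) = _ * v i + _ * w i
        ring
      map_smul' := by
        intro c v; ext i
        show _ * (c * v i) = c * (_ * v i)
        ring }

lemma Jlin_apply (p q : ℕ) (v : EuclideanSpace ℝ (Fin (p + q))) (i : Fin (p + q)) :
    Jlin p q v i = (if (i : ℕ) < p then (1 : ℝ) else -1) * v i := rfl

lemma Jlin_Jlin (p q : ℕ) (v : EuclideanSpace ℝ (Fin (p + q))) :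
    Jlin p q (Jlin p q v) = v := by
  ext i
  rw [Jlin_apply, Jlin_apply]
  by_cases h : (i : ℕ) < p
  · simp [h]
  · simp [h]

lemma norm_Jlin (p q : ℕ) (v : EuclideanSpace ℝ (Fin (p + q))) :
    ‖Jlin p q v‖ = ‖v‖ := by
  rw [EuclideanSpace.norm_eq, EuclideanSpace.norm_eq]
  congr 1
  refine Finset.sum_congr rfl fun i _ => ?_
  rw [Jlin_apply]
  by_cases h : (i : ℕ) < p
  · simp [h]
  · simp [h]

lemma inner_Jlin (p q : ℕ) (v w : EuclideanSpace ℝ (Fin (p + q))) :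
    (inner ℝ (Jlin p q v) w : ℝ) = pqForm p q v w := by
  rw [PiLp.inner_apply]
  refine Finset.sum_congr rfl fun i _ => ?_
  rw [Jlin_apply]
  simp only [RCLike.inner_apply, conj_trivial]
  ring

/-- For a sequence in `O(p,q)` with operator norms tending to infinity, there is a subsequence
admitting strongly approximately stable vectors. -/
theorem stmt0 (p q : ℕ) (hd : 1 ≤ p + q)
    (A : ℕ → (EuclideanSpace ℝ (Fin (p + q)) →L[ℝ] EuclideanSpace ℝ (Fin (p + q))))
    (hO : ∀ n v w, pqForm p q (A n v) (A n w) = pqForm p q v w)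
    (hnorm : Tendsto (fun n => ‖A n‖) atTop atTop) :
    ∃ nk : ℕ → ℕ, StrictMono nk ∧
      ∃ (v : ℕ → EuclideanSpace ℝ (Fin (p + q))) (vlim : EuclideanSpace ℝ (Fin (p + q))),
        Tendsto v atTop (nhds vlim) ∧ vlim ≠ 0 ∧
        Tendsto (fun k => A (nk k) (v k)) atTop (nhds 0) := by
  classical
  set E := EuclideanSpace ℝ (Fin (p + q)) with hE
  set J : E →L[ℝ] E := Jlin p q with hJdef
  -- adjoint relation : A† J A = J
  have hadj : ∀ n v, (ContinuousLinearMap.adjoint (A n)) (J (A n v)) = J v := by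
    intro n v
    apply ext_inner_right ℝ
    intro w
    rw [ContinuousLinearMap.adjoint_inner_left, inner_Jlin, inner_Jlin, hO]
  set B : ℕ → E →L[ℝ] E :=
    fun n => J.comp ((ContinuousLinearMap.adjoint (A n)).comp J) with hBdef
  have hBA : ∀ n v, B n (A n v) = v := by
    intro n v
    show J ((ContinuousLinearMap.adjoint (A n)) (J (A n v))) = v
    rw [hadj, Jlin_Jlin]
  have hAB : ∀ n u, A n (B n u) = u := by
    intro n u
    have hinj : Function.Injective (A n) := fun x y h => by
      have := congrArg (B n) h
      rwa [hBA, hBA] at this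
    have hsurj : Function.Surjective (A n) :=
      (LinearMap.injective_iff_surjective (f := ((A n : E →ₗ[ℝ] E)))).mp hinj
    obtain ⟨x, hx⟩ := hsurj u
    rw [← hx, hBA]
  have hnormB : ∀ n, ‖A n‖ ≤ ‖B n‖ := by
    intro n
    have h1 : ‖ContinuousLinearMap.adjoint (A n)‖ = ‖A n‖ :=
      ContinuousLinearMap.adjoint.norm_map (A n)
    rw [← h1]
    refine ContinuousLinearMap.opNorm_le_bound _ (norm_nonneg _) fun x => ?_
    have h2 : (ContinuousLinearMap.adjoint (A n)) x = J (B n (J x)) := by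
      show _ = J (J ((ContinuousLinearMap.adjoint (A n)) (J (J x))))
      rw [Jlin_Jlin, Jlin_Jlin]
    rw [h2, norm_Jlin]
    calc ‖B n (J x)‖ ≤ ‖B n‖ * ‖J x‖ := (B n).le_opNorm _
      _ = ‖B n‖ * ‖x‖ := by rw [norm_Jlin]
  -- extract subsequence with ‖A (φ k)‖ ≥ k+1
  obtain ⟨φ, hφ, hφA⟩ := Filter.extraction_forall_of_eventually
    (P := fun k n => ((k : ℝ) + 1) ≤ ‖A n‖)
    (fun k => hnorm.eventually_ge_atTop ((k : ℝ) + 1))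
  have hBpos : ∀ k : ℕ, ((k : ℝ) + 1) / 2 < ‖B (φ k)‖ := by
    intro k
    have h1 := hnormB (φ k)
    have h2 := hφA k
    have : (0 : ℝ) ≤ (k : ℝ) := Nat.cast_nonneg k
    linarith
  choose u hu1 hu2 using fun k =>
    (B (φ k)).exists_lt_apply_of_lt_opNorm (hBpos k)
  have hBu_pos : ∀ k, 0 < ‖B (φ k) (u k)‖ := by
    intro k
    refine lt_of_le_of_lt ?_ (hu2 k)
    positivity
  set w : ℕ → E := fun k => ‖B (φ k) (u k)‖⁻¹ • B (φ k) (u k) with hwdef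
  have hwnorm : ∀ k, ‖w k‖ = 1 := by
    intro k
    rw [hwdef]
    simp only [norm_smul, norm_inv, norm_norm]
    rw [norm_norm]
    exact inv_mul_cancel₀ (hBu_pos k).ne'
  have hwball : ∀ k, w k ∈ Metric.closedBall (0 : E) 1 := by
    intro k
    rw [Metric.mem_closedBall, dist_zero_right, hwnorm k]
  obtain ⟨vl, _, ψ, hψ, hconv⟩ :=
    tendsto_subseq_of_bounded (Metric.isBounded_closedBall (x := (0 : E)) (r := 1)) hwball
  refine ⟨φ ∘ ψ, hφ.comp hψ, fun k => w (ψ k), vl, hconv, ?_, ?_⟩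
  · -- vl ≠ 0 since ‖vl‖ = 1
    have : Tendsto (fun k => ‖w (ψ k)‖) atTop (nhds ‖vl‖) := hconv.norm
    have h1 : ‖vl‖ = 1 := by
      have h2 : Tendsto (fun _ : ℕ => (1 : ℝ)) atTop (nhds ‖vl‖) := by
        simpa [hwnorm] using this
      exact tendsto_nhds_unique h2 tendsto_const_nhds
    intro h
    rw [h, norm_zero] at h1
    norm_num at h1
  · -- A (φ (ψ k)) (w (ψ k)) → 0
    rw [tendsto_zero_iff_norm_tendsto_zero]
    have hle : ∀ k, ‖A (φ (ψ k)) (w (ψ k))‖ ≤ 2 / ((k : ℝ) + 1) := by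
      intro k
      have h1 : A (φ (ψ k)) (w (ψ k)) = ‖B (φ (ψ k)) (u (ψ k))‖⁻¹ • u (ψ k) := by
        rw [hwdef]
        simp only [map_smul]
        rw [hAB]
      rw [h1, norm_smul, norm_inv, norm_norm]
      have h2 : ((k : ℝ) + 1) / 2 < ‖B (φ (ψ k)) (u (ψ k))‖ := by
        refine lt_of_le_of_lt ?_ (hu2 (ψ k))
        have : (k : ℝ) ≤ (ψ k : ℝ) := Nat.cast_le.mpr (hψ.id_le k)
        linarith
      have h3 : 0 < ((k : ℝ) + 1) / 2 := by positivity
      have h4 : ‖B (φ (ψ k)) (u (ψ k))‖⁻¹ ≤ (((k : ℝ) + 1) / 2)⁻¹ :=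
        inv_anti₀ h3 h2.le
      have h5 : ‖u (ψ k)‖ ≤ 1 := (hu1 (ψ k)).le
      calc ‖B (φ (ψ k)) (u (ψ k))‖⁻¹ * ‖u (ψ k)‖
          ≤ (((k : ℝ) + 1) / 2)⁻¹ * 1 :=
            mul_le_mul h4 h5 (norm_nonneg _) (by positivity)
        _ = 2 / ((k : ℝ) + 1) := by rw [mul_one, inv_div]
    refine squeeze_zero (fun k => norm_nonneg _) hle ?_
    exact Tendsto.div_atTop tendsto_const_nhds
      (tendsto_atTop_add_const_right atTop 1 tendsto_natCast_atTop_atTop)
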